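/- arXiv:2003.03636 — 2 statements merged into one kernel-verified Lean document; each statement's English description precedes it below -/
import Mathlib

section
/- Let ζ and ζ̃ be probability measures on (ℝ^d × {−1,1}^d)² with finite second moments, and let 𝒥 be the interpolation operator (𝒥f)(x,v,x',v') = (‖x'−x‖₂/√d) ∫_0^1 f(x + t(x'−x), v) dt. Then for every bounded Lipschitz f, |ζ(𝒥f) − ζ̃(𝒥f)| ≤ d_W(ζ, ζ̃) · ( (1/√d) |f|_Lip · E_ζ[‖x' − x‖₂²]^{1/2} + (1/√d) ‖f‖_∞ ), where d_W is the 2-Wasserstein distance and E_ζ[‖x'−x‖₂²] is the expected square jump distance under ζ. -/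
open MeasureTheory

/-- The interpolation operator on `u = ((x, v), (x', v'))`:
`(𝒥 f)(u) = (‖x' − x‖₂/√d) ∫_0^1 f(x + t(x' − x), v) dt`. -/
noncomputable def Jop {d : ℕ}
    (f : EuclideanSpace ℝ (Fin d) → EuclideanSpace ℝ (Fin d) → ℝ)
    (u : (EuclideanSpace ℝ (Fin d) × EuclideanSpace ℝ (Fin d)) ×
         (EuclideanSpace ℝ (Fin d) × EuclideanSpace ℝ (Fin d))) : ℝ :=
  (‖u.2.1 - u.1.1‖ / Real.sqrt d) * ∫ t in (0:ℝ)..1, f (u.1.1 + t • (u.2.1 - u.1.1)) u.1.2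

/-- The 2-Wasserstein distance on `(ℝ^d × {−1,1}^d)²` for the ground norm
`‖u₁ − u₂‖ = ‖x₁−x₂‖₂ + ‖v₁−v₂‖₂ + ‖x₁'−x₂'‖₂ + ‖v₁'−v₂'‖₂`. -/
noncomputable def W2S {d : ℕ}
    (μ ν : Measure ((EuclideanSpace ℝ (Fin d) × EuclideanSpace ℝ (Fin d)) ×
      (EuclideanSpace ℝ (Fin d) × EuclideanSpace ℝ (Fin d)))) : ℝ :=
  Real.sqrt (sInf {r : ℝ | ∃ ξ, ξ.map Prod.fst = μ ∧ ξ.map Prod.snd = ν ∧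
    r = ∫ p, (‖p.1.1.1 - p.2.1.1‖ + ‖p.1.1.2 - p.2.1.2‖ +
              ‖p.1.2.1 - p.2.2.1‖ + ‖p.1.2.2 - p.2.2.2‖) ^ 2 ∂ξ})

section Aux

instance euclidProd_borelSpace {d : ℕ} :
    BorelSpace (EuclideanSpace ℝ (Fin d) × EuclideanSpace ℝ (Fin d)) := Prod.borelSpace

instance euclidProd4_borelSpace {d : ℕ} :
    BorelSpace ((EuclideanSpace ℝ (Fin d) × EuclideanSpace ℝ (Fin d)) ×
      (EuclideanSpace ℝ (Fin d) × EuclideanSpace ℝ (Fin d))) := Prod.borelSpace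

/-- Cauchy–Schwarz for integrals of nonnegative functions. -/
lemma cs_int {α : Type*} [MeasurableSpace α] (μ : Measure α) (f g : α → ℝ)
    (hfm : AEStronglyMeasurable f μ) (hgm : AEStronglyMeasurable g μ)
    (hf0 : 0 ≤ᵐ[μ] f) (hg0 : 0 ≤ᵐ[μ] g)
    (hf2 : Integrable (fun x => f x ^ 2) μ) (hg2 : Integrable (fun x => g x ^ 2) μ) :
    ∫ x, f x * g x ∂μ ≤ Real.sqrt (∫ x, f x ^ 2 ∂μ) * Real.sqrt (∫ x, g x ^ 2 ∂μ) := by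
  have hpq : Real.HolderConjugate 2 2 := Real.HolderConjugate.two_two
  have hfL : MemLp f (ENNReal.ofReal 2) μ := by
    rw [show ENNReal.ofReal 2 = 2 by norm_num]
    exact (memLp_two_iff_integrable_sq hfm).mpr hf2
  have hgL : MemLp g (ENNReal.ofReal 2) μ := by
    rw [show ENNReal.ofReal 2 = 2 by norm_num]
    exact (memLp_two_iff_integrable_sq hgm).mpr hg2
  have h := integral_mul_le_Lp_mul_Lq_of_nonneg hpq hf0 hg0 hfL hgL
  calc ∫ x, f x * g x ∂μ ≤ (∫ a, f a ^ (2:ℝ) ∂μ) ^ ((1:ℝ)/2) * (∫ a, g a ^ (2:ℝ) ∂μ) ^ ((1:ℝ)/2) := h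
    _ = Real.sqrt (∫ x, f x ^ 2 ∂μ) * Real.sqrt (∫ x, g x ^ 2 ∂μ) := by
        have h2 : ∀ x:ℝ, x ^ (2:ℝ) = x ^ 2 := fun x => by
          rw [← Real.rpow_natCast x 2]; norm_num
        simp_rw [h2, Real.sqrt_eq_rpow]

lemma mul_le_half_sq_add_sq (a b : ℝ) : a * b ≤ 1 / 2 * (a ^ 2 + b ^ 2) := by
  nlinarith [sq_nonneg (a - b)]

lemma sum4_sq_le (a1 a2 a3 a4 : ℝ) :
    (a1 + a2 + a3 + a4) ^ 2 ≤ 4 * (a1 ^ 2 + a2 ^ 2 + a3 ^ 2 + a4 ^ 2) := by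
  nlinarith [sq_nonneg (a1 - a2), sq_nonneg (a1 - a3), sq_nonneg (a1 - a4),
    sq_nonneg (a2 - a3), sq_nonneg (a2 - a4), sq_nonneg (a3 - a4)]

lemma norm_sub_sq_le {E : Type*} [NormedAddCommGroup E] (a b : E) :
    ‖a - b‖ ^ 2 ≤ 2 * ‖a‖ ^ 2 + 2 * ‖b‖ ^ 2 := by
  have h := norm_sub_le a b
  nlinarith [norm_nonneg a, norm_nonneg b, norm_nonneg (a - b), sq_nonneg (‖a‖ - ‖b‖)]

variable {d : ℕ} {f : EuclideanSpace ℝ (Fin d) → EuclideanSpace ℝ (Fin d) → ℝ} {Lf Bf : ℝ}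

lemma path_cont (hLip : ∀ x v y w, |f x v - f y w| ≤ Lf * (‖x - y‖ + ‖v - w‖))
    (x e v : EuclideanSpace ℝ (Fin d)) :
    Continuous fun t : ℝ => f (x + t • e) v := by
  have hf1 : ∀ s t : ℝ, |f (x + s • e) v - f (x + t • e) v| ≤ (Lf * ‖e‖) * |s - t| := by
    intro s t
    have := hLip (x + s • e) v (x + t • e) v
    have he : x + s • e - (x + t • e) = (s - t) • e := by module
    rw [he] at this
    simpa [norm_smul, abs_mul, mul_comm, mul_assoc, mul_left_comm] using this
  have : LipschitzWith (Real.toNNReal (Lf * ‖e‖)) fun t : ℝ => f (x + t • e) v := by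
    apply LipschitzWith.of_dist_le_mul
    intro s t
    calc dist (f (x + s • e) v) (f (x + t • e) v) = |f (x + s • e) v - f (x + t • e) v| := rfl
      _ ≤ (Lf * ‖e‖) * |s - t| := hf1 s t
      _ ≤ (Real.toNNReal (Lf * ‖e‖)) * dist s t := by
          rw [Real.dist_eq]
          exact mul_le_mul_of_nonneg_right (Real.le_coe_toNNReal _) (abs_nonneg _)
  exact this.continuous

lemma Jop_diff_le (hd : 0 < d)
    (hLip : ∀ x v y w, |f x v - f y w| ≤ Lf * (‖x - y‖ + ‖v - w‖))
    (hBdd : ∀ x v, |f x v| ≤ Bf) (hLf : 0 ≤ Lf) (hBf : 0 ≤ Bf)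
    (u1 u2 : (EuclideanSpace ℝ (Fin d) × EuclideanSpace ℝ (Fin d)) ×
         (EuclideanSpace ℝ (Fin d) × EuclideanSpace ℝ (Fin d))) :
    |Jop f u1 - Jop f u2| ≤ (1 / Real.sqrt d) * (Lf * ‖u1.2.1 - u1.1.1‖ + Bf) *
      (‖u1.1.1 - u2.1.1‖ + ‖u1.1.2 - u2.1.2‖ + ‖u1.2.1 - u2.2.1‖ + ‖u1.2.2 - u2.2.2‖) := by
  obtain ⟨⟨x1, v1⟩, ⟨x1', v1'⟩⟩ := u1
  obtain ⟨⟨x2, v2⟩, ⟨x2', v2'⟩⟩ := u2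
  simp only [Jop]
  set s := Real.sqrt d with hs
  have hspos : 0 < s := Real.sqrt_pos.mpr (by exact_mod_cast hd)
  set I1 := ∫ t in (0:ℝ)..1, f (x1 + t • (x1' - x1)) v1 with hI1
  set I2 := ∫ t in (0:ℝ)..1, f (x2 + t • (x2' - x2)) v2 with hI2
  have hint1 : IntervalIntegrable (fun t : ℝ => f (x1 + t • (x1' - x1)) v1) volume 0 1 :=
    (path_cont hLip x1 (x1' - x1) v1).intervalIntegrable 0 1
  have hint2 : IntervalIntegrable (fun t : ℝ => f (x2 + t • (x2' - x2)) v2) volume 0 1 :=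
    (path_cont hLip x2 (x2' - x2) v2).intervalIntegrable 0 1
  have hI2b : |I2| ≤ Bf := by
    have := intervalIntegral.norm_integral_le_of_norm_le_const
      (C := Bf) (f := fun t : ℝ => f (x2 + t • (x2' - x2)) v2) (a := (0:ℝ)) (b := 1)
      (fun t _ => hBdd _ _)
    simpa using this
  have hI12 : |I1 - I2| ≤ Lf * (‖x1 - x2‖ + ‖x1' - x2'‖ + ‖v1 - v2‖) := by
    rw [← intervalIntegral.integral_sub hint1 hint2]
    have hb : ∀ t ∈ Set.uIoc (0:ℝ) 1,
        ‖f (x1 + t • (x1' - x1)) v1 - f (x2 + t • (x2' - x2)) v2‖ ≤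
          Lf * (‖x1 - x2‖ + ‖x1' - x2'‖ + ‖v1 - v2‖) := by
      intro t ht
      rw [Set.uIoc_of_le (by norm_num : (0:ℝ) ≤ 1)] at ht
      have ht0 : 0 ≤ t := le_of_lt ht.1
      have ht1 : t ≤ 1 := ht.2
      have heq : x1 + t • (x1' - x1) - (x2 + t • (x2' - x2))
          = (1 - t) • (x1 - x2) + t • (x1' - x2') := by module
      have hx : ‖x1 + t • (x1' - x1) - (x2 + t • (x2' - x2))‖ ≤ ‖x1 - x2‖ + ‖x1' - x2'‖ := by
        rw [heq]
        calc ‖(1 - t) • (x1 - x2) + t • (x1' - x2')‖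
            ≤ ‖(1 - t) • (x1 - x2)‖ + ‖t • (x1' - x2')‖ := norm_add_le _ _
          _ = |1 - t| * ‖x1 - x2‖ + |t| * ‖x1' - x2'‖ := by rw [norm_smul, norm_smul]; rfl
          _ ≤ 1 * ‖x1 - x2‖ + 1 * ‖x1' - x2'‖ := by
              gcongr
              · rw [abs_of_nonneg (by linarith)]; linarith
              · rw [abs_of_nonneg ht0]; linarith
          _ = ‖x1 - x2‖ + ‖x1' - x2'‖ := by ring
      calc ‖f (x1 + t • (x1' - x1)) v1 - f (x2 + t • (x2' - x2)) v2‖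
          ≤ Lf * (‖x1 + t • (x1' - x1) - (x2 + t • (x2' - x2))‖ + ‖v1 - v2‖) := hLip _ _ _ _
        _ ≤ Lf * (‖x1 - x2‖ + ‖x1' - x2'‖ + ‖v1 - v2‖) := by
            apply mul_le_mul_of_nonneg_left _ hLf
            linarith
    have := intervalIntegral.norm_integral_le_of_norm_le_const hb
    simpa using this
  have hn : |‖x1' - x1‖ - ‖x2' - x2‖| ≤ ‖x1 - x2‖ + ‖x1' - x2'‖ := by
    calc |‖x1' - x1‖ - ‖x2' - x2‖| ≤ ‖(x1' - x1) - (x2' - x2)‖ := abs_norm_sub_norm_le _ _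
      _ = ‖(x1' - x2') - (x1 - x2)‖ := by congr 1; abel
      _ ≤ ‖x1' - x2'‖ + ‖x1 - x2‖ := norm_sub_le _ _
      _ = ‖x1 - x2‖ + ‖x1' - x2'‖ := by ring
  have hkey : ‖x1' - x1‖ / s * I1 - ‖x2' - x2‖ / s * I2
      = (‖x1' - x1‖ / s) * (I1 - I2) + ((‖x1' - x1‖ - ‖x2' - x2‖) / s) * I2 := by ring
  rw [hkey]
  have habs : |(‖x1' - x1‖ / s) * (I1 - I2) + ((‖x1' - x1‖ - ‖x2' - x2‖) / s) * I2|
      ≤ (‖x1' - x1‖ / s) * |I1 - I2| + (|‖x1' - x1‖ - ‖x2' - x2‖| / s) * |I2| := by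
    calc |(‖x1' - x1‖ / s) * (I1 - I2) + ((‖x1' - x1‖ - ‖x2' - x2‖) / s) * I2|
        ≤ |(‖x1' - x1‖ / s) * (I1 - I2)| + |((‖x1' - x1‖ - ‖x2' - x2‖) / s) * I2| := abs_add_le _ _
      _ = (‖x1' - x1‖ / s) * |I1 - I2| + (|‖x1' - x1‖ - ‖x2' - x2‖| / s) * |I2| := by
          rw [abs_mul, abs_mul, abs_div, abs_div, abs_of_nonneg (norm_nonneg _),
            abs_of_nonneg hspos.le]
  refine habs.trans ?_
  have h1 : 0 ≤ ‖x1' - x1‖ := norm_nonneg _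
  have h2 : 0 ≤ ‖x1 - x2‖ := norm_nonneg _
  have h3 : 0 ≤ ‖x1' - x2'‖ := norm_nonneg _
  have h4 : 0 ≤ ‖v1 - v2‖ := norm_nonneg _
  have h5 : 0 ≤ ‖v1' - v2'‖ := norm_nonneg _
  have h6 : 0 ≤ |I2| := abs_nonneg _
  have h7 : 0 ≤ |I1 - I2| := abs_nonneg _
  have h8 : 0 ≤ |‖x1' - x1‖ - ‖x2' - x2‖| := abs_nonneg _
  rw [div_mul_eq_mul_div, div_mul_eq_mul_div, ← add_div, one_div, inv_mul_eq_div,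
    div_mul_eq_mul_div, div_le_div_iff_of_pos_right hspos]
  nlinarith [mul_le_mul_of_nonneg_left hI12 h1, mul_le_mul_of_nonneg_left hI2b h8,
    mul_le_mul_of_nonneg_left hn hBf, mul_nonneg (mul_nonneg hLf h1) h5,
    mul_nonneg (mul_nonneg hLf h1) h4, mul_nonneg hBf h4, mul_nonneg hBf h5]

lemma Jop_abs_le (hBdd : ∀ x v, |f x v| ≤ Bf) (hBf : 0 ≤ Bf)
    (u : (EuclideanSpace ℝ (Fin d) × EuclideanSpace ℝ (Fin d)) ×
         (EuclideanSpace ℝ (Fin d) × EuclideanSpace ℝ (Fin d))) :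
    |Jop f u| ≤ (Bf / Real.sqrt d) * (‖u.1.1‖ + ‖u.2.1‖) := by
  have hi : |∫ t in (0:ℝ)..1, f (u.1.1 + t • (u.2.1 - u.1.1)) u.1.2| ≤ Bf := by
    have := intervalIntegral.norm_integral_le_of_norm_le_const
      (C := Bf) (f := fun t : ℝ => f (u.1.1 + t • (u.2.1 - u.1.1)) u.1.2) (a := (0:ℝ)) (b := 1)
      (fun t _ => hBdd _ _)
    simpa using this
  have hsd : 0 ≤ Real.sqrt d := Real.sqrt_nonneg _
  have hn : ‖u.2.1 - u.1.1‖ ≤ ‖u.1.1‖ + ‖u.2.1‖ := by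
    calc ‖u.2.1 - u.1.1‖ ≤ ‖u.2.1‖ + ‖u.1.1‖ := norm_sub_le _ _
      _ = ‖u.1.1‖ + ‖u.2.1‖ := by ring
  rw [Jop, abs_mul, abs_div, abs_of_nonneg (norm_nonneg _), abs_of_nonneg hsd]
  rcases eq_or_lt_of_le hsd with h | h
  · simp [← h]
  · rw [div_mul_eq_mul_div, div_mul_eq_mul_div, div_le_div_iff_of_pos_right h]
    have h1 : 0 ≤ ‖u.2.1 - u.1.1‖ := norm_nonneg _
    have h2 : 0 ≤ ‖u.1.1‖ + ‖u.2.1‖ := by positivity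
    nlinarith [abs_nonneg (∫ t in (0:ℝ)..1, f (u.1.1 + t • (u.2.1 - u.1.1)) u.1.2)]

lemma Jop_cont (hd : 0 < d)
    (hLip : ∀ x v y w, |f x v - f y w| ≤ Lf * (‖x - y‖ + ‖v - w‖))
    (hBdd : ∀ x v, |f x v| ≤ Bf) (hLf : 0 ≤ Lf) (hBf : 0 ≤ Bf) :
    Continuous (Jop f) := by
  rw [continuous_iff_continuousAt]
  intro u0
  rw [ContinuousAt, tendsto_iff_norm_sub_tendsto_zero]
  set g : ((EuclideanSpace ℝ (Fin d) × EuclideanSpace ℝ (Fin d)) ×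
      (EuclideanSpace ℝ (Fin d) × EuclideanSpace ℝ (Fin d))) → ℝ :=
    fun u => (1 / Real.sqrt d) * (Lf * ‖u.2.1 - u.1.1‖ + Bf) *
      (‖u.1.1 - u0.1.1‖ + ‖u.1.2 - u0.1.2‖ + ‖u.2.1 - u0.2.1‖ + ‖u.2.2 - u0.2.2‖) with hg
  have hgc : Continuous g := by fun_prop
  have hg0 : g u0 = 0 := by simp [hg]
  refine squeeze_zero (g := g) (fun u => norm_nonneg _) (fun u => ?_) ?_
  · exact Jop_diff_le hd hLip hBdd hLf hBf u u0
  · have := hgc.continuousAt (x := u0)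
    rw [ContinuousAt, hg0] at this
    exact this

/-- Integrability of `Jop f` from the second-moment assumption. -/
lemma Jop_integrable (hBdd : ∀ x v, |f x v| ≤ Bf) (hBf : 0 ≤ Bf)
    (hc : Continuous (Jop f))
    (μ : Measure ((EuclideanSpace ℝ (Fin d) × EuclideanSpace ℝ (Fin d)) ×
         (EuclideanSpace ℝ (Fin d) × EuclideanSpace ℝ (Fin d))))
    [IsProbabilityMeasure μ]
    (h2 : Integrable (fun u => ‖u.1.1‖ ^ 2 + ‖u.1.2‖ ^ 2 + ‖u.2.1‖ ^ 2 + ‖u.2.2‖ ^ 2) μ) :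
    Integrable (Jop f) μ := by
  apply Integrable.mono'
    (g := fun u => (Bf / Real.sqrt d) *
      (2 + (‖u.1.1‖ ^ 2 + ‖u.1.2‖ ^ 2 + ‖u.2.1‖ ^ 2 + ‖u.2.2‖ ^ 2)))
    (((integrable_const (2:ℝ)).add h2).const_mul _) hc.aestronglyMeasurable
  filter_upwards with u
  have h := Jop_abs_le hBdd hBf u
  have hc0 : 0 ≤ Bf / Real.sqrt d := by positivity
  refine h.trans ?_
  apply mul_le_mul_of_nonneg_left _ hc0
  nlinarith [sq_nonneg (‖u.1.1‖ - 1), sq_nonneg (‖u.2.1‖ - 1), sq_nonneg (‖u.1.2‖),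
    sq_nonneg (‖u.2.2‖)]

end Aux

set_option maxHeartbeats 1000000 in
/-- **Step 1 of the proof of Theorem 2: Wasserstein bound on interpolated averages.**
For probability measures `ζ, ζ̃` with finite second moments on the extended state space
and `f` bounded (by `Bf`) and Lipschitz (with constant `Lf`),
`|ζ(𝒥f) − ζ̃(𝒥f)| ≤ d_W(ζ, ζ̃) ((1/√d) Lf E_ζ[‖x'−x‖²]^{1/2} + (1/√d) Bf)`. -/
theorem interpolated_average_wasserstein_bound {d : ℕ} (hd : 0 < d)
    (ζ ζt : Measure ((EuclideanSpace ℝ (Fin d) × EuclideanSpace ℝ (Fin d)) ×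
      (EuclideanSpace ℝ (Fin d) × EuclideanSpace ℝ (Fin d))))
    [IsProbabilityMeasure ζ] [IsProbabilityMeasure ζt]
    (hζ2 : Integrable (fun u => ‖u.1.1‖ ^ 2 + ‖u.1.2‖ ^ 2 + ‖u.2.1‖ ^ 2 + ‖u.2.2‖ ^ 2) ζ)
    (hζt2 : Integrable (fun u => ‖u.1.1‖ ^ 2 + ‖u.1.2‖ ^ 2 + ‖u.2.1‖ ^ 2 + ‖u.2.2‖ ^ 2) ζt)
    (f : EuclideanSpace ℝ (Fin d) → EuclideanSpace ℝ (Fin d) → ℝ)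
    (Lf Bf : ℝ)
    (hLip : ∀ x v y w, |f x v - f y w| ≤ Lf * (‖x - y‖ + ‖v - w‖))
    (hBdd : ∀ x v, |f x v| ≤ Bf) :
    |(∫ u, Jop f u ∂ζ) - ∫ u, Jop f u ∂ζt| ≤
      W2S ζ ζt * ((1 / Real.sqrt d) * Lf * Real.sqrt (∫ u, ‖u.2.1 - u.1.1‖ ^ 2 ∂ζ) +
        (1 / Real.sqrt d) * Bf) := by
  have hLf : 0 ≤ Lf := by
    have hx : ‖EuclideanSpace.single (⟨0, hd⟩ : Fin d) (1:ℝ)‖ = 1 := by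
      rw [EuclideanSpace.norm_single]; norm_num
    have h := hLip (EuclideanSpace.single (⟨0, hd⟩ : Fin d) (1:ℝ)) 0 0 0
    rw [sub_zero, sub_zero, hx] at h
    simp only [norm_zero, add_zero, mul_one] at h
    exact le_trans (abs_nonneg _) h
  have hBf : 0 ≤ Bf := (abs_nonneg _).trans (hBdd 0 0)
  have hdpos : (0:ℝ) < Real.sqrt d := Real.sqrt_pos.mpr (by exact_mod_cast hd)
  have hEN2nonneg : 0 ≤ ∫ u, ‖u.2.1 - u.1.1‖ ^ 2 ∂ζ := integral_nonneg (fun u => sq_nonneg _)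
  rcases eq_or_lt_of_le hBf with hBf0 | hBfpos
  · -- degenerate case `Bf = 0`, so `f ≡ 0`
    have hf0 : ∀ x v, f x v = 0 := by
      intro x v
      have := hBdd x v
      rw [← hBf0] at this
      exact abs_eq_zero.mp (le_antisymm this (abs_nonneg _))
    have hJ0 : ∀ u, Jop f u = 0 := by
      intro u
      simp [Jop, hf0]
    simp only [hJ0, integral_zero, sub_zero, abs_zero]
    apply mul_nonneg
    · exact Real.sqrt_nonneg _
    · apply add_nonneg
      · exact mul_nonneg (mul_nonneg (by positivity) hLf) (Real.sqrt_nonneg _)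
      · exact mul_nonneg (by positivity) hBf
  · -- main case
    set K := (1 / Real.sqrt d) * Lf * Real.sqrt (∫ u, ‖u.2.1 - u.1.1‖ ^ 2 ∂ζ) +
        (1 / Real.sqrt d) * Bf with hK
    have hKpos : 0 < K := by
      have h1 : 0 < (1 / Real.sqrt d) * Bf := by positivity
      have h2 : 0 ≤ (1 / Real.sqrt d) * Lf * Real.sqrt (∫ u, ‖u.2.1 - u.1.1‖ ^ 2 ∂ζ) :=
        mul_nonneg (mul_nonneg (by positivity) hLf) (Real.sqrt_nonneg _)
      rw [hK]; linarith
    have hJc : Continuous (Jop f) := Jop_cont hd hLip hBdd hLf hBf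
    have hJζ : Integrable (Jop f) ζ := Jop_integrable hBdd hBf hJc ζ hζ2
    have hJζt : Integrable (Jop f) ζt := Jop_integrable hBdd hBf hJc ζt hζt2
    -- notation
    set M : ((EuclideanSpace ℝ (Fin d) × EuclideanSpace ℝ (Fin d)) ×
        (EuclideanSpace ℝ (Fin d) × EuclideanSpace ℝ (Fin d))) → ℝ :=
      fun u => (1 / Real.sqrt d) * (Lf * ‖u.2.1 - u.1.1‖ + Bf) with hM
    have hMc : Continuous M := by rw [hM]; fun_prop
    -- integrability of `‖x' - x‖` and its square under ζ
    have hNc : Continuous (fun u : ((EuclideanSpace ℝ (Fin d) × EuclideanSpace ℝ (Fin d)) ×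
        (EuclideanSpace ℝ (Fin d) × EuclideanSpace ℝ (Fin d))) => ‖u.2.1 - u.1.1‖) := by fun_prop
    have hN2 : Integrable (fun u => ‖u.2.1 - u.1.1‖ ^ 2) ζ := by
      apply Integrable.mono' (hζ2.const_mul 2) (hNc.pow 2).aestronglyMeasurable
      filter_upwards with u
      rw [Pi.pow_apply, Real.norm_of_nonneg (sq_nonneg _)]
      have := norm_sub_sq_le u.2.1 u.1.1
      nlinarith [sq_nonneg ‖u.1.2‖, sq_nonneg ‖u.2.2‖]
    have hN1 : Integrable (fun u => ‖u.2.1 - u.1.1‖) ζ := by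
      have hgint : Integrable (fun u => 1 + ‖u.2.1 - u.1.1‖ ^ 2) ζ :=
        (integrable_const (1:ℝ)).add hN2
      apply Integrable.mono' hgint hNc.aestronglyMeasurable
      filter_upwards with u
      rw [Real.norm_of_nonneg (norm_nonneg _)]
      nlinarith [sq_nonneg (‖u.2.1 - u.1.1‖ - 1)]
    have hM2 : Integrable (fun u => M u ^ 2) ζ := by
      have heq : (fun u => M u ^ 2) = (fun u =>
          ((1 / Real.sqrt d) ^ 2 * Lf ^ 2) * ‖u.2.1 - u.1.1‖ ^ 2 +
          ((1 / Real.sqrt d) ^ 2 * (2 * Lf * Bf)) * ‖u.2.1 - u.1.1‖ +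
          (1 / Real.sqrt d) ^ 2 * Bf ^ 2) := by
        funext u; rw [hM]; ring
      rw [heq]
      exact ((hN2.const_mul _).add (hN1.const_mul _)).add (integrable_const _)
    -- `∫ M² ≤ K²`
    have hEN1 : ∫ u, ‖u.2.1 - u.1.1‖ ∂ζ ≤ Real.sqrt (∫ u, ‖u.2.1 - u.1.1‖ ^ 2 ∂ζ) := by
      have h := cs_int ζ (fun u => ‖u.2.1 - u.1.1‖) (fun _ => 1)
        hNc.aestronglyMeasurable aestronglyMeasurable_const
        (Filter.Eventually.of_forall fun u => norm_nonneg _)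
        (Filter.Eventually.of_forall fun _ => zero_le_one)
        hN2 (by simpa using integrable_const (1:ℝ))
      simpa using h
    have hM2le : ∫ u, M u ^ 2 ∂ζ ≤ K ^ 2 := by
      have hiM : ∫ u, M u ^ 2 ∂ζ =
          ((1 / Real.sqrt d) ^ 2 * Lf ^ 2) * (∫ u, ‖u.2.1 - u.1.1‖ ^ 2 ∂ζ) +
          ((1 / Real.sqrt d) ^ 2 * (2 * Lf * Bf)) * (∫ u, ‖u.2.1 - u.1.1‖ ∂ζ) +
          (1 / Real.sqrt d) ^ 2 * Bf ^ 2 := by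
        have heq : (fun u => M u ^ 2) = (fun u =>
            ((1 / Real.sqrt d) ^ 2 * Lf ^ 2) * ‖u.2.1 - u.1.1‖ ^ 2 +
            (((1 / Real.sqrt d) ^ 2 * (2 * Lf * Bf)) * ‖u.2.1 - u.1.1‖ +
            (1 / Real.sqrt d) ^ 2 * Bf ^ 2)) := by
          funext u; rw [hM]; ring
        have i1 : Integrable (fun u => ((1 / Real.sqrt d) ^ 2 * Lf ^ 2) *
            ‖u.2.1 - u.1.1‖ ^ 2) ζ := hN2.const_mul _
        have i2 : Integrable (fun u => ((1 / Real.sqrt d) ^ 2 * (2 * Lf * Bf)) *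
            ‖u.2.1 - u.1.1‖) ζ := hN1.const_mul _
        have i3 : Integrable (fun _ : ((EuclideanSpace ℝ (Fin d) × EuclideanSpace ℝ (Fin d)) ×
            (EuclideanSpace ℝ (Fin d) × EuclideanSpace ℝ (Fin d))) =>
            (1 / Real.sqrt d) ^ 2 * Bf ^ 2) ζ := integrable_const _
        have i23 : Integrable (fun u => ((1 / Real.sqrt d) ^ 2 * (2 * Lf * Bf)) *
            ‖u.2.1 - u.1.1‖ + (1 / Real.sqrt d) ^ 2 * Bf ^ 2) ζ := i2.add i3
        rw [heq, integral_add i1 i23, integral_add i2 i3,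
          integral_const_mul, integral_const_mul, integral_const]
        simp only [probReal_univ, smul_eq_mul, one_mul]
        ring
      have hsq : Real.sqrt (∫ u, ‖u.2.1 - u.1.1‖ ^ 2 ∂ζ) ^ 2 = ∫ u, ‖u.2.1 - u.1.1‖ ^ 2 ∂ζ :=
        Real.sq_sqrt hEN2nonneg
      have hexp : ((1 / Real.sqrt d) * Lf * Real.sqrt (∫ u, ‖u.2.1 - u.1.1‖ ^ 2 ∂ζ) +
          (1 / Real.sqrt d) * Bf) ^ 2 =
          (1 / Real.sqrt d) ^ 2 * Lf ^ 2 * (∫ u, ‖u.2.1 - u.1.1‖ ^ 2 ∂ζ) +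
          (1 / Real.sqrt d) ^ 2 * (2 * Lf * Bf) *
            Real.sqrt (∫ u, ‖u.2.1 - u.1.1‖ ^ 2 ∂ζ) +
          (1 / Real.sqrt d) ^ 2 * Bf ^ 2 := by
        linear_combination ((1 / Real.sqrt d) ^ 2 * Lf ^ 2) * hsq
      have hc0 : (0:ℝ) ≤ (1 / Real.sqrt d) ^ 2 * (2 * Lf * Bf) := by positivity
      rw [hiM, hK, hexp]
      linarith [mul_le_mul_of_nonneg_left hEN1 hc0]
    have hMK : Real.sqrt (∫ u, M u ^ 2 ∂ζ) ≤ K := by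
      calc Real.sqrt (∫ u, M u ^ 2 ∂ζ) ≤ Real.sqrt (K ^ 2) := Real.sqrt_le_sqrt hM2le
        _ = K := Real.sqrt_sq hKpos.le
    -- the set of coupling costs
    set c := |(∫ u, Jop f u ∂ζ) - ∫ u, Jop f u ∂ζt| with hc
    set Sset := {r : ℝ | ∃ ξ, ξ.map Prod.fst = ζ ∧ ξ.map Prod.snd = ζt ∧
      r = ∫ p, (‖p.1.1.1 - p.2.1.1‖ + ‖p.1.1.2 - p.2.1.2‖ +
                ‖p.1.2.1 - p.2.2.1‖ + ‖p.1.2.2 - p.2.2.2‖) ^ 2 ∂ξ} with hSset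
    have hSne : Sset.Nonempty := by
      rw [hSset]
      exact ⟨_, ζ.prod ζt, Measure.fst_prod, Measure.snd_prod, rfl⟩
    have hSnonneg : ∀ r ∈ Sset, 0 ≤ r := by
      rintro r ⟨ξ, -, -, rfl⟩
      exact integral_nonneg fun p => sq_nonneg _
    -- the main estimate for each coupling
    have hclaim : ∀ r ∈ Sset, c ≤ Real.sqrt r * K := by
      rintro r ⟨ξ, hξ1, hξ2, hr⟩
      haveI : IsProbabilityMeasure ξ := by
        constructor
        have h : (ξ.map Prod.fst) Set.univ = 1 := by rw [hξ1]; exact measure_univ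
        rwa [Measure.map_apply measurable_fst MeasurableSet.univ, Set.preimage_univ] at h
      set D : (((EuclideanSpace ℝ (Fin d) × EuclideanSpace ℝ (Fin d)) ×
          (EuclideanSpace ℝ (Fin d) × EuclideanSpace ℝ (Fin d))) ×
          ((EuclideanSpace ℝ (Fin d) × EuclideanSpace ℝ (Fin d)) ×
          (EuclideanSpace ℝ (Fin d) × EuclideanSpace ℝ (Fin d)))) → ℝ :=
        fun p => ‖p.1.1.1 - p.2.1.1‖ + ‖p.1.1.2 - p.2.1.2‖ +
                ‖p.1.2.1 - p.2.2.1‖ + ‖p.1.2.2 - p.2.2.2‖ with hD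
      have hDc : Continuous D := by rw [hD]; fun_prop
      have hD0 : ∀ p, 0 ≤ D p := fun p => by rw [hD]; positivity
      -- transfers along the marginals
      have hJm1 : AEStronglyMeasurable (Jop f) (ξ.map Prod.fst) := by
        rw [hξ1]; exact hJc.aestronglyMeasurable
      have hJm2 : AEStronglyMeasurable (Jop f) (ξ.map Prod.snd) := by
        rw [hξ2]; exact hJc.aestronglyMeasurable
      have hint1 : Integrable (fun p => Jop f p.1) ξ := by
        have := (integrable_map_measure hJm1 measurable_fst.aemeasurable).mp
          (by rw [hξ1]; exact hJζ)
        simpa [Function.comp_def] using this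
      have hint2 : Integrable (fun p => Jop f p.2) ξ := by
        have := (integrable_map_measure hJm2 measurable_snd.aemeasurable).mp
          (by rw [hξ2]; exact hJζt)
        simpa [Function.comp_def] using this
      have heq1 : ∫ u, Jop f u ∂ζ = ∫ p, Jop f p.1 ∂ξ := by
        rw [← hξ1, integral_map measurable_fst.aemeasurable hJm1]
      have heq2 : ∫ u, Jop f u ∂ζt = ∫ p, Jop f p.2 ∂ξ := by
        rw [← hξ2, integral_map measurable_snd.aemeasurable hJm2]
      -- integrability of the dominating functions under ξ
      have hAc : Continuous (fun u : ((EuclideanSpace ℝ (Fin d) × EuclideanSpace ℝ (Fin d)) ×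
          (EuclideanSpace ℝ (Fin d) × EuclideanSpace ℝ (Fin d))) =>
          ‖u.1.1‖ ^ 2 + ‖u.1.2‖ ^ 2 + ‖u.2.1‖ ^ 2 + ‖u.2.2‖ ^ 2) := by fun_prop
      have hA1 : Integrable (fun p => ‖p.1.1.1‖ ^ 2 + ‖p.1.1.2‖ ^ 2 + ‖p.1.2.1‖ ^ 2 +
          ‖p.1.2.2‖ ^ 2) ξ := by
        have := (integrable_map_measure (by rw [hξ1]; exact hAc.aestronglyMeasurable)
          measurable_fst.aemeasurable).mp (by rw [hξ1]; exact hζ2)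
        simpa [Function.comp_def] using this
      have hA2 : Integrable (fun p => ‖p.2.1.1‖ ^ 2 + ‖p.2.1.2‖ ^ 2 + ‖p.2.2.1‖ ^ 2 +
          ‖p.2.2.2‖ ^ 2) ξ := by
        have := (integrable_map_measure (by rw [hξ2]; exact hAc.aestronglyMeasurable)
          measurable_snd.aemeasurable).mp (by rw [hξ2]; exact hζt2)
        simpa [Function.comp_def] using this
      have hD2int : Integrable (fun p => D p ^ 2) ξ := by
        have hA12 : Integrable (fun p => (‖p.1.1.1‖ ^ 2 + ‖p.1.1.2‖ ^ 2 + ‖p.1.2.1‖ ^ 2 +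
            ‖p.1.2.2‖ ^ 2) + (‖p.2.1.1‖ ^ 2 + ‖p.2.1.2‖ ^ 2 + ‖p.2.2.1‖ ^ 2 +
            ‖p.2.2.2‖ ^ 2)) ξ := hA1.add hA2
        apply Integrable.mono' (hA12.const_mul 8) (hDc.pow 2).aestronglyMeasurable
        filter_upwards with p
        rw [Pi.pow_apply, Real.norm_of_nonneg (sq_nonneg _)]
        simp only [hD]
        have h1 := norm_sub_sq_le p.1.1.1 p.2.1.1
        have h2 := norm_sub_sq_le p.1.1.2 p.2.1.2
        have h3 := norm_sub_sq_le p.1.2.1 p.2.2.1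
        have h4 := norm_sub_sq_le p.1.2.2 p.2.2.2
        have hs := sum4_sq_le ‖p.1.1.1 - p.2.1.1‖ ‖p.1.1.2 - p.2.1.2‖
          ‖p.1.2.1 - p.2.2.1‖ ‖p.1.2.2 - p.2.2.2‖
        nlinarith
      have hM2ξ : Integrable (fun p => M p.1 ^ 2) ξ := by
        have := (integrable_map_measure
          (by rw [hξ1]; exact (hMc.pow 2).aestronglyMeasurable)
          measurable_fst.aemeasurable).mp (by rw [hξ1]; exact hM2)
        simpa [Function.comp_def] using this
      have hM0 : ∀ u, 0 ≤ M u := by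
        intro u
        rw [hM]
        have : 0 ≤ Lf * ‖u.2.1 - u.1.1‖ := mul_nonneg hLf (norm_nonneg _)
        positivity
      have hMDint : Integrable (fun p => M p.1 * D p) ξ := by
        have hMD2 : Integrable (fun p => M p.1 ^ 2 + D p ^ 2) ξ := hM2ξ.add hD2int
        apply Integrable.mono' (hMD2.const_mul (1/2))
          ((hMc.comp continuous_fst).mul hDc).aestronglyMeasurable
        filter_upwards with p
        show ‖M p.1 * D p‖ ≤ 1 / 2 * (M p.1 ^ 2 + D p ^ 2)
        rw [Real.norm_of_nonneg (mul_nonneg (hM0 p.1) (hD0 p))]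
        exact mul_le_half_sq_add_sq (M p.1) (D p)
      -- the chain of inequalities
      have hsqM : Real.sqrt (∫ p, M p.1 ^ 2 ∂ξ) = Real.sqrt (∫ u, M u ^ 2 ∂ζ) := by
        congr 1
        rw [← hξ1, integral_map measurable_fst.aemeasurable
          (by rw [hξ1]; exact (hMc.pow 2).aestronglyMeasurable)]
      calc c = |∫ p, (Jop f p.1 - Jop f p.2) ∂ξ| := by
              rw [hc, heq1, heq2, integral_sub hint1 hint2]
        _ ≤ ∫ p, |Jop f p.1 - Jop f p.2| ∂ξ := by
              simpa using norm_integral_le_integral_norm (fun p => Jop f p.1 - Jop f p.2) (μ := ξ)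
        _ ≤ ∫ p, M p.1 * D p ∂ξ := by
              apply integral_mono (hint1.sub hint2).abs hMDint
              intro p
              have h := Jop_diff_le hd hLip hBdd hLf hBf p.1 p.2
              simp only [hM, hD]
              exact h
        _ ≤ Real.sqrt (∫ p, M p.1 ^ 2 ∂ξ) * Real.sqrt (∫ p, D p ^ 2 ∂ξ) := by
              apply cs_int ξ _ _ ((hMc.comp continuous_fst).aestronglyMeasurable)
                hDc.aestronglyMeasurable
                (Filter.Eventually.of_forall fun p => hM0 p.1)
                (Filter.Eventually.of_forall hD0) hM2ξ hD2int
        _ = Real.sqrt (∫ u, M u ^ 2 ∂ζ) * Real.sqrt r := by rw [hsqM, hr]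
        _ ≤ K * Real.sqrt r := mul_le_mul_of_nonneg_right hMK (Real.sqrt_nonneg _)
        _ = Real.sqrt r * K := mul_comm _ _
    -- conclude by taking infimum
    have hlb : ∀ r ∈ Sset, (c / K) ^ 2 ≤ r := by
      intro r hr
      have h := hclaim r hr
      have h2 : c / K ≤ Real.sqrt r := (div_le_iff₀ hKpos).mpr h
      have h3 : 0 ≤ c / K := div_nonneg (abs_nonneg _) hKpos.le
      calc (c / K) ^ 2 ≤ Real.sqrt r ^ 2 := by nlinarith [Real.sqrt_nonneg r]
        _ = r := Real.sq_sqrt (hSnonneg r hr)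
    have hinf : (c / K) ^ 2 ≤ sInf Sset := le_csInf hSne hlb
    have h4 : c / K ≤ Real.sqrt (sInf Sset) :=
      (Real.le_sqrt (div_nonneg (abs_nonneg _) hKpos.le)
        (le_trans (sq_nonneg _) hinf)).mpr hinf
    have h5 : c ≤ Real.sqrt (sInf Sset) * K := (div_le_iff₀ hKpos).mp h4
    have hW : W2S ζ ζt = Real.sqrt (sInf Sset) := rfl
    rw [← hc, ← hK] at *
    rw [hW]
    exact h5
end

section
/- Let μ(f) = H^{−1} ζ(𝒥f) and μ̃(f) = H̃^{−1} ζ̃(𝒥f), where H = ζ(g) > 0, H̃ = ζ̃(g) > 0 with g(x,v,x',v') = ‖x−x'‖₂/√d, and 𝒥 is the interpolation operator. Then for every bounded Lipschitz function f, |μ̃(f) − μ(f)| ≤ (d_W(ζ, ζ̃) / (√d · H̃)) · ( |f|_Lip · E_ζ[‖x' − x‖²]^{1/2} + ‖f‖_∞ + |μ(f)| ). -/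
open MeasureTheory

/-! ### Auxiliary definitions and lemmas -/

abbrev Sp (d : ℕ) := (EuclideanSpace ℝ (Fin d) × EuclideanSpace ℝ (Fin d)) ×
    (EuclideanSpace ℝ (Fin d) × EuclideanSpace ℝ (Fin d))

noncomputable def costFn {d : ℕ} (p : Sp d × Sp d) : ℝ :=
  ‖p.1.1.1 - p.2.1.1‖ + ‖p.1.1.2 - p.2.1.2‖ + ‖p.1.2.1 - p.2.2.1‖ + ‖p.1.2.2 - p.2.2.2‖

noncomputable def sqFn {d : ℕ} (u : Sp d) : ℝ :=
  ‖u.1.1‖ ^ 2 + ‖u.1.2‖ ^ 2 + ‖u.2.1‖ ^ 2 + ‖u.2.2‖ ^ 2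

noncomputable def g0 {d : ℕ} (u : Sp d) : ℝ := ‖u.1.1 - u.2.1‖ / Real.sqrt d

section Aux

variable {d : ℕ}
local notation "E" => EuclideanSpace ℝ (Fin d)

instance : BorelSpace ((E × E) × (E × E)) := Prod.borelSpace

instance : BorelSpace (((E × E) × (E × E)) × ((E × E) × (E × E))) := Prod.borelSpace

lemma cs_int_s15 {α : Type*} [MeasurableSpace α] (μ : Measure α)
    {φ ψ : α → ℝ} (hφ : MemLp φ 2 μ) (hψ : MemLp ψ 2 μ)
    (hφ0 : ∀ x, 0 ≤ φ x) (hψ0 : ∀ x, 0 ≤ ψ x) :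
    ∫ x, φ x * ψ x ∂μ ≤ Real.sqrt (∫ x, φ x ^ 2 ∂μ) * Real.sqrt (∫ x, ψ x ^ 2 ∂μ) := by
  have h22 : (2:ℝ).HolderConjugate 2 := Real.holderConjugate_iff.mpr ⟨by norm_num, by norm_num⟩
  have h2 : ENNReal.ofReal (2:ℝ) = 2 := by norm_num
  have := integral_mul_norm_le_Lp_mul_Lq (μ := μ) h22 (h2 ▸ hφ) (h2 ▸ hψ)
  calc ∫ x, φ x * ψ x ∂μ = ∫ x, ‖φ x‖ * ‖ψ x‖ ∂μ := by
        congr 1; ext x; rw [Real.norm_of_nonneg (hφ0 x), Real.norm_of_nonneg (hψ0 x)]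
    _ ≤ (∫ a, ‖φ a‖ ^ (2:ℝ) ∂μ) ^ (1/(2:ℝ)) * (∫ a, ‖ψ a‖ ^ (2:ℝ) ∂μ) ^ (1/(2:ℝ)) := this
    _ = Real.sqrt (∫ x, φ x ^ 2 ∂μ) * Real.sqrt (∫ x, ψ x ^ 2 ∂μ) := by
        rw [Real.sqrt_eq_rpow, Real.sqrt_eq_rpow]
        congr 2
        · congr 1; ext x; rw [Real.norm_of_nonneg (hφ0 x)]
          rw [show ((2:ℝ) = ((2:ℕ):ℝ)) by norm_num, Real.rpow_natCast]
        · congr 1; ext x; rw [Real.norm_of_nonneg (hψ0 x)]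
          rw [show ((2:ℝ) = ((2:ℕ):ℝ)) by norm_num, Real.rpow_natCast]

lemma sqrt_sInf_bound {S : Set ℝ} (hne : S.Nonempty) (hS0 : ∀ r ∈ S, 0 ≤ r)
    {D C : ℝ} (hD : 0 ≤ D) (hC : 0 ≤ C) (h : ∀ r ∈ S, D ≤ Real.sqrt r * C) :
    D ≤ Real.sqrt (sInf S) * C := by
  rcases eq_or_lt_of_le hC with hC0 | hCpos
  · obtain ⟨r, hr⟩ := hne
    have := h r hr
    rw [← hC0] at this ⊢
    simpa using this
  · have key : ∀ r ∈ S, (D / C) ^ 2 ≤ r := by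
      intro r hr
      have h1 : D / C ≤ Real.sqrt r := by
        rw [div_le_iff₀ hCpos]; exact h r hr
      have h2 : (D / C) ^ 2 ≤ Real.sqrt r ^ 2 :=
        pow_le_pow_left₀ (div_nonneg hD hC) h1 2
      rwa [Real.sq_sqrt (hS0 r hr)] at h2
    have hinf : (D / C) ^ 2 ≤ sInf S := le_csInf hne key
    have : D / C ≤ Real.sqrt (sInf S) :=
      (Real.le_sqrt (div_nonneg hD hC) (le_csInf hne hS0)).mpr hinf
    calc D = D / C * C := by field_simp
      _ ≤ Real.sqrt (sInf S) * C := mul_le_mul_of_nonneg_right this hC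

lemma cont_line (f : E → E → ℝ) {Lf : ℝ}
    (hLip : ∀ x v y w, |f x v - f y w| ≤ Lf * (‖x - y‖ + ‖v - w‖))
    (x y v : E) : Continuous fun t : ℝ => f (x + t • y) v := by
  refine LipschitzWith.continuous (K := (Lf * ‖y‖).toNNReal) ?_
  refine LipschitzWith.of_dist_le_mul fun t s => ?_
  have h1 : dist (f (x + t • y) v) (f (x + s • y) v) ≤ Lf * (|t - s| * ‖y‖) := by
    rw [Real.dist_eq]
    calc |f (x + t • y) v - f (x + s • y) v| ≤ Lf * (‖(x + t • y) - (x + s • y)‖ + ‖v - v‖) :=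
          hLip _ _ _ _
      _ = Lf * (|t - s| * ‖y‖) := by
          rw [show (x + t • y) - (x + s • y) = (t - s) • y by module]
          rw [norm_smul, sub_self, norm_zero, add_zero, Real.norm_eq_abs]
  calc dist (f (x + t • y) v) (f (x + s • y) v) ≤ Lf * ‖y‖ * |t - s| := by
        rw [mul_comm (|t-s|)] at h1; linarith [h1]
    _ ≤ (Lf * ‖y‖).toNNReal * dist t s := by
        rw [Real.dist_eq]
        exact mul_le_mul_of_nonneg_right (Real.le_coe_toNNReal _) (abs_nonneg _)

lemma I_bound (f : E → E → ℝ) {Lf : ℝ} (hLf : 0 ≤ Lf)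
    (hLip : ∀ x v y w, |f x v - f y w| ≤ Lf * (‖x - y‖ + ‖v - w‖))
    (u₁ u₂ : Sp d) :
    |(∫ t in (0:ℝ)..1, f (u₁.1.1 + t • (u₁.2.1 - u₁.1.1)) u₁.1.2) -
      ∫ t in (0:ℝ)..1, f (u₂.1.1 + t • (u₂.2.1 - u₂.1.1)) u₂.1.2| ≤
      Lf * (‖u₁.1.1 - u₂.1.1‖ + ‖u₁.2.1 - u₂.2.1‖ + ‖u₁.1.2 - u₂.1.2‖) := by
  have hi1 : IntervalIntegrable (fun t : ℝ => f (u₁.1.1 + t • (u₁.2.1 - u₁.1.1)) u₁.1.2)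
      MeasureTheory.volume 0 1 := (cont_line f hLip _ _ _).intervalIntegrable 0 1
  have hi2 : IntervalIntegrable (fun t : ℝ => f (u₂.1.1 + t • (u₂.2.1 - u₂.1.1)) u₂.1.2)
      MeasureTheory.volume 0 1 := (cont_line f hLip _ _ _).intervalIntegrable 0 1
  rw [← intervalIntegral.integral_sub hi1 hi2]
  have key : ∀ t ∈ Set.uIoc (0:ℝ) 1,
      ‖f (u₁.1.1 + t • (u₁.2.1 - u₁.1.1)) u₁.1.2 - f (u₂.1.1 + t • (u₂.2.1 - u₂.1.1)) u₂.1.2‖ ≤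
      Lf * (‖u₁.1.1 - u₂.1.1‖ + ‖u₁.2.1 - u₂.2.1‖ + ‖u₁.1.2 - u₂.1.2‖) := by
    intro t ht
    rw [Set.uIoc_of_le (by norm_num : (0:ℝ) ≤ 1)] at ht
    obtain ⟨ht0, ht1⟩ := ht
    rw [Real.norm_eq_abs]
    have hγ : ‖(u₁.1.1 + t • (u₁.2.1 - u₁.1.1)) - (u₂.1.1 + t • (u₂.2.1 - u₂.1.1))‖ ≤
        ‖u₁.1.1 - u₂.1.1‖ + ‖u₁.2.1 - u₂.2.1‖ := by
      rw [show (u₁.1.1 + t • (u₁.2.1 - u₁.1.1)) - (u₂.1.1 + t • (u₂.2.1 - u₂.1.1)) =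
          (1 - t) • (u₁.1.1 - u₂.1.1) + t • (u₁.2.1 - u₂.2.1) by module]
      calc ‖(1 - t) • (u₁.1.1 - u₂.1.1) + t • (u₁.2.1 - u₂.2.1)‖ ≤
            ‖(1 - t) • (u₁.1.1 - u₂.1.1)‖ + ‖t • (u₁.2.1 - u₂.2.1)‖ := norm_add_le _ _
        _ = (1 - t) * ‖u₁.1.1 - u₂.1.1‖ + t * ‖u₁.2.1 - u₂.2.1‖ := by
            rw [norm_smul, norm_smul, Real.norm_eq_abs, Real.norm_eq_abs,
              abs_of_nonneg (by linarith), abs_of_nonneg (by linarith)]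
        _ ≤ ‖u₁.1.1 - u₂.1.1‖ + ‖u₁.2.1 - u₂.2.1‖ := by
            have := norm_nonneg (u₁.1.1 - u₂.1.1); have := norm_nonneg (u₁.2.1 - u₂.2.1)
            nlinarith
    calc |f (u₁.1.1 + t • (u₁.2.1 - u₁.1.1)) u₁.1.2 - f (u₂.1.1 + t • (u₂.2.1 - u₂.1.1)) u₂.1.2| ≤
          Lf * (‖(u₁.1.1 + t • (u₁.2.1 - u₁.1.1)) - (u₂.1.1 + t • (u₂.2.1 - u₂.1.1))‖ +
            ‖u₁.1.2 - u₂.1.2‖) := hLip _ _ _ _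
      _ ≤ Lf * (‖u₁.1.1 - u₂.1.1‖ + ‖u₁.2.1 - u₂.2.1‖ + ‖u₁.1.2 - u₂.1.2‖) := by
          apply mul_le_mul_of_nonneg_left _ hLf; linarith
  have := intervalIntegral.norm_integral_le_of_norm_le_const key
  simpa using this

lemma I_cont (f : E → E → ℝ) {Lf : ℝ} (hLf : 0 ≤ Lf)
    (hLip : ∀ x v y w, |f x v - f y w| ≤ Lf * (‖x - y‖ + ‖v - w‖)) :
    Continuous fun u : Sp d =>
      ∫ t in (0:ℝ)..1, f (u.1.1 + t • (u.2.1 - u.1.1)) u.1.2 := by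
  refine LipschitzWith.continuous (K := (3 * Lf).toNNReal) ?_
  refine LipschitzWith.of_dist_le_mul fun u₁ u₂ => ?_
  have h11 : ‖u₁.1.1 - u₂.1.1‖ ≤ dist u₁ u₂ := by
    rw [← dist_eq_norm]
    exact le_trans (le_max_left (dist u₁.1.1 u₂.1.1) (dist u₁.1.2 u₂.1.2))
      (le_max_left (dist u₁.1 u₂.1) (dist u₁.2 u₂.2))
  have h12 : ‖u₁.1.2 - u₂.1.2‖ ≤ dist u₁ u₂ := by
    rw [← dist_eq_norm]
    exact le_trans (le_max_right (dist u₁.1.1 u₂.1.1) (dist u₁.1.2 u₂.1.2))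
      (le_max_left (dist u₁.1 u₂.1) (dist u₁.2 u₂.2))
  have h21 : ‖u₁.2.1 - u₂.2.1‖ ≤ dist u₁ u₂ := by
    rw [← dist_eq_norm]
    exact le_trans (le_max_left (dist u₁.2.1 u₂.2.1) (dist u₁.2.2 u₂.2.2))
      (le_max_right (dist u₁.1 u₂.1) (dist u₁.2 u₂.2))
  have hb := I_bound f hLf hLip u₁ u₂
  rw [Real.dist_eq]
  calc |(∫ t in (0:ℝ)..1, f (u₁.1.1 + t • (u₁.2.1 - u₁.1.1)) u₁.1.2) -
        ∫ t in (0:ℝ)..1, f (u₂.1.1 + t • (u₂.2.1 - u₂.1.1)) u₂.1.2| ≤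
      Lf * (‖u₁.1.1 - u₂.1.1‖ + ‖u₁.2.1 - u₂.2.1‖ + ‖u₁.1.2 - u₂.1.2‖) := hb
    _ ≤ Lf * (3 * dist u₁ u₂) := by
        apply mul_le_mul_of_nonneg_left _ hLf; linarith
    _ = 3 * Lf * dist u₁ u₂ := by ring
    _ ≤ (3 * Lf).toNNReal * dist u₁ u₂ :=
        mul_le_mul_of_nonneg_right (Real.le_coe_toNNReal _) dist_nonneg

lemma I_abs_le (f : E → E → ℝ) {Bf : ℝ}
    (hBdd : ∀ x v, |f x v| ≤ Bf) (u : Sp d) :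
    |∫ t in (0:ℝ)..1, f (u.1.1 + t • (u.2.1 - u.1.1)) u.1.2| ≤ Bf := by
  have key : ∀ t ∈ Set.uIoc (0:ℝ) 1, ‖f (u.1.1 + t • (u.2.1 - u.1.1)) u.1.2‖ ≤ Bf :=
    fun t _ => hBdd _ _
  simpa using intervalIntegral.norm_integral_le_of_norm_le_const key

lemma Jop_diff_bound (hd : 0 < d) (f : E → E → ℝ) {Lf Bf : ℝ} (hLf : 0 ≤ Lf)
    (hLip : ∀ x v y w, |f x v - f y w| ≤ Lf * (‖x - y‖ + ‖v - w‖))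
    (hBdd : ∀ x v, |f x v| ≤ Bf) (u₁ u₂ : Sp d) :
    |Jop f u₁ - Jop f u₂| ≤
      Lf * g0 u₁ * costFn (u₁, u₂) + Bf / Real.sqrt d * costFn (u₁, u₂) := by
  have hBf : 0 ≤ Bf := le_trans (abs_nonneg _) (hBdd 0 0)
  have hsd : 0 < Real.sqrt d := Real.sqrt_pos.mpr (by exact_mod_cast hd)
  set I₁ := ∫ t in (0:ℝ)..1, f (u₁.1.1 + t • (u₁.2.1 - u₁.1.1)) u₁.1.2 with hI₁
  set I₂ := ∫ t in (0:ℝ)..1, f (u₂.1.1 + t • (u₂.2.1 - u₂.1.1)) u₂.1.2 with hI₂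
  set g₁ := ‖u₁.2.1 - u₁.1.1‖ / Real.sqrt d with hg₁
  set g₂ := ‖u₂.2.1 - u₂.1.1‖ / Real.sqrt d with hg₂
  set c := ‖u₁.1.1 - u₂.1.1‖ + ‖u₁.1.2 - u₂.1.2‖ + ‖u₁.2.1 - u₂.2.1‖ + ‖u₁.2.2 - u₂.2.2‖ with hc
  have hcostc : costFn (u₁, u₂) = c := rfl
  have hc0 : 0 ≤ c := by positivity
  have hJ : Jop f u₁ - Jop f u₂ = g₁ * (I₁ - I₂) + (g₁ - g₂) * I₂ := by
    simp only [Jop, ← hI₁, ← hI₂, ← hg₁, ← hg₂]; ring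
  have h1 : |g₁ * (I₁ - I₂)| ≤ g₁ * (Lf * c) := by
    rw [abs_mul, abs_of_nonneg (by positivity : (0:ℝ) ≤ g₁)]
    refine mul_le_mul_of_nonneg_left ?_ (by positivity)
    refine le_trans (I_bound f hLf hLip u₁ u₂) ?_
    apply mul_le_mul_of_nonneg_left _ hLf
    have := norm_nonneg (u₁.2.2 - u₂.2.2); rw [hc]; linarith
  have h2 : |(g₁ - g₂) * I₂| ≤ (c / Real.sqrt d) * Bf := by
    rw [abs_mul]
    have hg : |g₁ - g₂| ≤ c / Real.sqrt d := by
      rw [hg₁, hg₂, div_sub_div_same, abs_div, abs_of_pos hsd, div_le_div_iff_of_pos_right hsd]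
      calc |‖u₁.2.1 - u₁.1.1‖ - ‖u₂.2.1 - u₂.1.1‖| ≤ ‖(u₁.2.1 - u₁.1.1) - (u₂.2.1 - u₂.1.1)‖ :=
            abs_norm_sub_norm_le _ _
        _ ≤ ‖u₁.2.1 - u₂.2.1‖ + ‖u₁.1.1 - u₂.1.1‖ := by
            rw [show (u₁.2.1 - u₁.1.1) - (u₂.2.1 - u₂.1.1) =
              (u₁.2.1 - u₂.2.1) - (u₁.1.1 - u₂.1.1) by module]
            exact norm_sub_le _ _
        _ ≤ c := by have := norm_nonneg (u₁.1.2 - u₂.1.2);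
                    have := norm_nonneg (u₁.2.2 - u₂.2.2); rw [hc]; linarith
    exact mul_le_mul hg (I_abs_le f hBdd u₂) (abs_nonneg _) (by positivity)
  calc |Jop f u₁ - Jop f u₂| ≤ |g₁ * (I₁ - I₂)| + |(g₁ - g₂) * I₂| := by
        rw [hJ]; exact abs_add_le _ _
    _ ≤ g₁ * (Lf * c) + (c / Real.sqrt d) * Bf := add_le_add h1 h2
    _ = Lf * g0 u₁ * costFn (u₁, u₂) + Bf / Real.sqrt d * costFn (u₁, u₂) := by
        rw [hcostc, hg₁, g0, norm_sub_rev]; ring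

lemma g0_diff (hd : 0 < d) (u₁ u₂ : Sp d) :
    |g0 u₁ - g0 u₂| ≤ costFn (u₁, u₂) / Real.sqrt d := by
  have hsd : 0 < Real.sqrt d := Real.sqrt_pos.mpr (by exact_mod_cast hd)
  rw [g0, g0, div_sub_div_same, abs_div, abs_of_pos hsd, div_le_div_iff_of_pos_right hsd]
  calc |‖u₁.1.1 - u₁.2.1‖ - ‖u₂.1.1 - u₂.2.1‖| ≤ ‖(u₁.1.1 - u₁.2.1) - (u₂.1.1 - u₂.2.1)‖ :=
        abs_norm_sub_norm_le _ _
    _ ≤ ‖u₁.1.1 - u₂.1.1‖ + ‖u₁.2.1 - u₂.2.1‖ := by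
        rw [show (u₁.1.1 - u₁.2.1) - (u₂.1.1 - u₂.2.1) =
          (u₁.1.1 - u₂.1.1) - (u₁.2.1 - u₂.2.1) by module]
        exact norm_sub_le _ _
    _ ≤ costFn (u₁, u₂) := by
        have := norm_nonneg (u₁.1.2 - u₂.1.2); have := norm_nonneg (u₁.2.2 - u₂.2.2)
        rw [costFn]; linarith

lemma cont_g0 : Continuous (g0 (d := d)) := by
  unfold g0
  exact (continuous_norm.comp ((continuous_fst.comp continuous_fst).sub
    (continuous_fst.comp continuous_snd))).div_const _

lemma cont_cost : Continuous (costFn (d := d)) := by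
  unfold costFn
  fun_prop

lemma cont_Jop (f : E → E → ℝ) {Lf : ℝ} (hLf : 0 ≤ Lf)
    (hLip : ∀ x v y w, |f x v - f y w| ≤ Lf * (‖x - y‖ + ‖v - w‖)) :
    Continuous (Jop f) := by
  unfold Jop
  exact ((continuous_norm.comp ((continuous_fst.comp continuous_snd).sub
    (continuous_fst.comp continuous_fst))).div_const _).mul (I_cont f hLf hLip)

lemma Jop_integrable_s15 (hd : 0 < d) (μ : Measure (Sp d)) [IsProbabilityMeasure μ]
    (hμ2 : Integrable (sqFn (d := d)) μ)
    (f : E → E → ℝ) {Lf Bf : ℝ} (hLf : 0 ≤ Lf)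
    (hLip : ∀ x v y w, |f x v - f y w| ≤ Lf * (‖x - y‖ + ‖v - w‖))
    (hBdd : ∀ x v, |f x v| ≤ Bf) :
    Integrable (Jop f) μ := by
  have hBf : 0 ≤ Bf := le_trans (abs_nonneg _) (hBdd 0 0)
  have hsd1 : (1:ℝ) ≤ Real.sqrt d := by
    rw [show (1:ℝ) = Real.sqrt 1 by simp]
    exact Real.sqrt_le_sqrt (by exact_mod_cast hd)
  have hdom : Integrable (fun u : Sp d => Bf * (2 + sqFn u)) μ :=
    (((integrable_const (2:ℝ)).add hμ2).const_mul Bf)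
  refine hdom.mono' (cont_Jop f hLf hLip).aestronglyMeasurable (ae_of_all _ fun u => ?_)
  rw [Real.norm_eq_abs, Jop, abs_mul]
  have h1 : |‖u.2.1 - u.1.1‖ / Real.sqrt d| ≤ ‖u.2.1 - u.1.1‖ := by
    rw [abs_of_nonneg (by positivity)]
    exact div_le_self (norm_nonneg _) hsd1
  have h2 : ‖u.2.1 - u.1.1‖ ≤ 2 + sqFn u := by
    have := norm_sub_le u.2.1 u.1.1
    have h3 : ‖u.2.1‖ ≤ 1 + ‖u.2.1‖ ^ 2 := by nlinarith [sq_nonneg (‖u.2.1‖ - 1)]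
    have h4 : ‖u.1.1‖ ≤ 1 + ‖u.1.1‖ ^ 2 := by nlinarith [sq_nonneg (‖u.1.1‖ - 1)]
    rw [sqFn]
    have := sq_nonneg ‖u.1.2‖; have := sq_nonneg ‖u.2.2‖
    linarith
  have hsq0 : (0:ℝ) ≤ 2 + sqFn u := by rw [sqFn]; positivity
  have : |‖u.2.1 - u.1.1‖ / Real.sqrt d| * |∫ t in (0:ℝ)..1, f (u.1.1 + t • (u.2.1 - u.1.1)) u.1.2|
      ≤ (2 + sqFn u) * Bf :=
    mul_le_mul (le_trans h1 h2) (I_abs_le f hBdd u) (abs_nonneg _) hsq0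
  linarith [this]


lemma add_sq_le' (a b : ℝ) : (a + b) ^ 2 ≤ 2 * a ^ 2 + 2 * b ^ 2 := by
  nlinarith [sq_nonneg (a - b)]

lemma sum8_sq (a b c e a' b' c' e' : ℝ) :
    ((a + a') + (b + b') + (c + c') + (e + e')) ^ 2 ≤
      8 * ((a ^ 2 + b ^ 2 + c ^ 2 + e ^ 2) + (a' ^ 2 + b' ^ 2 + c' ^ 2 + e' ^ 2)) := by
  have h1 := add_sq_le' ((a + a') + (b + b')) ((c + c') + (e + e'))
  have h2 := add_sq_le' (a + a') (b + b')
  have h3 := add_sq_le' (c + c') (e + e')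
  have h4 := add_sq_le' a a'
  have h5 := add_sq_le' b b'
  have h6 := add_sq_le' c c'
  have h7 := add_sq_le' e e'
  nlinarith [h1, h2, h3, h4, h5, h6, h7]

lemma cost_sq_le (p : Sp d × Sp d) : costFn p ^ 2 ≤ 8 * (sqFn p.1 + sqFn p.2) := by
  have t1 : ‖p.1.1.1 - p.2.1.1‖ ≤ ‖p.1.1.1‖ + ‖p.2.1.1‖ := norm_sub_le _ _
  have t2 : ‖p.1.1.2 - p.2.1.2‖ ≤ ‖p.1.1.2‖ + ‖p.2.1.2‖ := norm_sub_le _ _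
  have t3 : ‖p.1.2.1 - p.2.2.1‖ ≤ ‖p.1.2.1‖ + ‖p.2.2.1‖ := norm_sub_le _ _
  have t4 : ‖p.1.2.2 - p.2.2.2‖ ≤ ‖p.1.2.2‖ + ‖p.2.2.2‖ := norm_sub_le _ _
  have hc0 : 0 ≤ costFn p := by rw [costFn]; positivity
  have hT : costFn p ≤ (‖p.1.1.1‖ + ‖p.2.1.1‖) + (‖p.1.1.2‖ + ‖p.2.1.2‖) +
      (‖p.1.2.1‖ + ‖p.2.2.1‖) + (‖p.1.2.2‖ + ‖p.2.2.2‖) := by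
    rw [costFn]; linarith
  have hsq : costFn p ^ 2 ≤ ((‖p.1.1.1‖ + ‖p.2.1.1‖) + (‖p.1.1.2‖ + ‖p.2.1.2‖) +
      (‖p.1.2.1‖ + ‖p.2.2.1‖) + (‖p.1.2.2‖ + ‖p.2.2.2‖)) ^ 2 := pow_le_pow_left₀ hc0 hT 2
  have key := sum8_sq ‖p.1.1.1‖ ‖p.1.1.2‖ ‖p.1.2.1‖ ‖p.1.2.2‖ ‖p.2.1.1‖ ‖p.2.1.2‖ ‖p.2.2.1‖ ‖p.2.2.2‖
  rw [sqFn, sqFn]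
  linarith

lemma coupling_key (hd : 0 < d)
    (ζ ζt : Measure (Sp d)) [IsProbabilityMeasure ζ] [IsProbabilityMeasure ζt]
    (hζ2 : Integrable (sqFn (d := d)) ζ) (hζt2 : Integrable (sqFn (d := d)) ζt)
    (f : E → E → ℝ) {Lf Bf : ℝ} (hLf : 0 ≤ Lf)
    (hLip : ∀ x v y w, |f x v - f y w| ≤ Lf * (‖x - y‖ + ‖v - w‖))
    (hBdd : ∀ x v, |f x v| ≤ Bf)
    (ξ : Measure (Sp d × Sp d)) (hξ1 : ξ.map Prod.fst = ζ) (hξ2 : ξ.map Prod.snd = ζt) :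
    Real.sqrt d * |(∫ u, g0 u ∂ζ) - ∫ u, g0 u ∂ζt| ≤ Real.sqrt (∫ p, costFn p ^ 2 ∂ξ) ∧
    Real.sqrt d * |(∫ u, Jop f u ∂ζt) - ∫ u, Jop f u ∂ζ| ≤
      Real.sqrt (∫ p, costFn p ^ 2 ∂ξ) *
        (Lf * Real.sqrt (∫ u, ‖u.2.1 - u.1.1‖ ^ 2 ∂ζ) + Bf) := by
  have hBf : 0 ≤ Bf := le_trans (abs_nonneg _) (hBdd 0 0)
  have hdpos : (0:ℝ) < d := by exact_mod_cast hd
  have hd1 : (1:ℝ) ≤ d := by exact_mod_cast hd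
  have hsd : 0 < Real.sqrt d := Real.sqrt_pos.mpr hdpos
  haveI : IsProbabilityMeasure ξ := by
    constructor
    have h := congrArg (fun m : Measure (Sp d) => m Set.univ) hξ1
    simp only [Measure.map_apply measurable_fst MeasurableSet.univ, Set.preimage_univ] at h
    rw [h]; exact measure_univ
  -- continuity facts
  have hJc : Continuous (Jop (d := d) f) := cont_Jop f hLf hLip
  have hg0c : Continuous (g0 (d := d)) := cont_g0
  have hcc : Continuous (costFn (d := d)) := cont_cost
  have hsqc : Continuous (sqFn (d := d)) := by unfold sqFn; fun_prop
  have hcost0 : ∀ p : Sp d × Sp d, 0 ≤ costFn p := fun p => by rw [costFn]; positivity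
  have hg00 : ∀ u : Sp d, 0 ≤ g0 u := fun u => by rw [g0]; positivity
  -- integrability under ζ, ζt
  have hJζ : Integrable (Jop f) ζ := Jop_integrable_s15 hd ζ hζ2 f hLf hLip hBdd
  have hJζt : Integrable (Jop f) ζt := Jop_integrable_s15 hd ζt hζt2 f hLf hLip hBdd
  have hg0sq : ∀ (μ : Measure (Sp d)), Integrable (sqFn (d := d)) μ →
      Integrable (fun u => g0 u ^ 2) μ := by
    intro μ hμ2
    refine Integrable.mono' (hμ2.const_mul 2) ((hg0c.pow 2).aestronglyMeasurable)
      (ae_of_all _ fun u => ?_)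
    rw [Real.norm_eq_abs, abs_of_nonneg (sq_nonneg _), g0, div_pow, Real.sq_sqrt hdpos.le]
    have h1 : ‖u.1.1 - u.2.1‖ ^ 2 / (d : ℝ) ≤ ‖u.1.1 - u.2.1‖ ^ 2 :=
      div_le_self (sq_nonneg _) hd1
    have h2 : ‖u.1.1 - u.2.1‖ ≤ ‖u.1.1‖ + ‖u.2.1‖ := norm_sub_le _ _
    have h3 : ‖u.1.1 - u.2.1‖ ^ 2 ≤ 2 * ‖u.1.1‖ ^ 2 + 2 * ‖u.2.1‖ ^ 2 := by
      nlinarith [norm_nonneg (u.1.1 - u.2.1), norm_nonneg u.1.1, norm_nonneg u.2.1,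
        sq_nonneg (‖u.1.1‖ - ‖u.2.1‖)]
    rw [sqFn]
    have := sq_nonneg ‖u.1.2‖; have := sq_nonneg ‖u.2.2‖
    linarith
  have hg0sqζ : Integrable (fun u => g0 u ^ 2) ζ := hg0sq ζ hζ2
  have hg0sqζt : Integrable (fun u => g0 u ^ 2) ζt := hg0sq ζt hζt2
  have hg0ζ : Integrable (g0 (d := d)) ζ :=
    ((memLp_two_iff_integrable_sq hg0c.aestronglyMeasurable).mpr hg0sqζ).integrable one_le_two
  have hg0ζt : Integrable (g0 (d := d)) ζt :=
    ((memLp_two_iff_integrable_sq hg0c.aestronglyMeasurable).mpr hg0sqζt).integrable one_le_two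
  -- transfer along the marginal maps
  have htransf : ∀ (F : Sp d → ℝ), Continuous F → Integrable F ζ →
      Integrable (fun p : Sp d × Sp d => F p.1) ξ := by
    intro F hFc hFi
    have := (integrable_map_measure (μ := ξ) (f := Prod.fst) hFc.aestronglyMeasurable
      measurable_fst.aemeasurable)
    rw [hξ1] at this
    exact this.mp hFi
  have htranss : ∀ (F : Sp d → ℝ), Continuous F → Integrable F ζt →
      Integrable (fun p : Sp d × Sp d => F p.2) ξ := by
    intro F hFc hFi
    have := (integrable_map_measure (μ := ξ) (f := Prod.snd) hFc.aestronglyMeasurable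
      measurable_snd.aemeasurable)
    rw [hξ2] at this
    exact this.mp hFi
  have heqf : ∀ (F : Sp d → ℝ), Continuous F →
      ∫ u, F u ∂ζ = ∫ p, F p.1 ∂ξ := by
    intro F hFc
    rw [← hξ1, integral_map measurable_fst.aemeasurable hFc.aestronglyMeasurable]
  have heqs : ∀ (F : Sp d → ℝ), Continuous F →
      ∫ u, F u ∂ζt = ∫ p, F p.2 ∂ξ := by
    intro F hFc
    rw [← hξ2, integral_map measurable_snd.aemeasurable hFc.aestronglyMeasurable]
  -- cost integrability
  have hsq1 : Integrable (fun p : Sp d × Sp d => sqFn p.1) ξ := htransf _ hsqc hζ2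
  have hsq2 : Integrable (fun p : Sp d × Sp d => sqFn p.2) ξ := htranss _ hsqc hζt2
  have hcost2 : Integrable (fun p : Sp d × Sp d => costFn p ^ 2) ξ := by
    refine Integrable.mono' ((hsq1.add hsq2).const_mul 8) ((hcc.pow 2).aestronglyMeasurable)
      (ae_of_all _ fun p => ?_)
    rw [Real.norm_eq_abs, abs_of_nonneg (sq_nonneg _)]
    exact cost_sq_le p
  have hcostL2 : MemLp (costFn (d := d)) 2 ξ :=
    (memLp_two_iff_integrable_sq hcc.aestronglyMeasurable).mpr hcost2
  have hcostInt : Integrable (costFn (d := d)) ξ := hcostL2.integrable one_le_two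
  set r := ∫ p, costFn p ^ 2 ∂ξ with hrdef
  have hr0 : 0 ≤ r := integral_nonneg fun p => sq_nonneg _
  have hsr0 : 0 ≤ Real.sqrt r := Real.sqrt_nonneg r
  -- ∫ cost ≤ √r
  have hcs1 : ∫ p, costFn p ∂ξ ≤ Real.sqrt r := by
    have := cs_int_s15 ξ hcostL2 (memLp_const (1:ℝ)) hcost0 (fun _ => zero_le_one)
    simpa using this
  -- part 1
  have hGf : Integrable (fun p : Sp d × Sp d => g0 p.1) ξ := htransf _ hg0c hg0ζ
  have hGs : Integrable (fun p : Sp d × Sp d => g0 p.2) ξ := htranss _ hg0c hg0ζt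
  have part1 : Real.sqrt d * |(∫ u, g0 u ∂ζ) - ∫ u, g0 u ∂ζt| ≤ Real.sqrt r := by
    rw [heqf _ hg0c, heqs _ hg0c, ← integral_sub hGf hGs]
    have habs : |∫ p, (g0 p.1 - g0 p.2) ∂ξ| ≤ ∫ p, |g0 p.1 - g0 p.2| ∂ξ := by
      simpa [Real.norm_eq_abs] using norm_integral_le_integral_norm
        (μ := ξ) (fun p : Sp d × Sp d => g0 p.1 - g0 p.2)
    have hmono : ∫ p, |g0 p.1 - g0 p.2| ∂ξ ≤ ∫ p, costFn p / Real.sqrt d ∂ξ :=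
      integral_mono (hGf.sub hGs).abs (hcostInt.div_const _)
        (fun p => g0_diff hd p.1 p.2)
    have hdiv : ∫ p, costFn p / Real.sqrt d ∂ξ = (∫ p, costFn p ∂ξ) / Real.sqrt d :=
      integral_div _ _
    have : |∫ p, (g0 p.1 - g0 p.2) ∂ξ| ≤ Real.sqrt r / Real.sqrt d := by
      refine le_trans habs (le_trans hmono ?_)
      rw [hdiv]
      gcongr
    calc Real.sqrt d * |∫ p, (g0 p.1 - g0 p.2) ∂ξ| ≤
        Real.sqrt d * (Real.sqrt r / Real.sqrt d) :=
          mul_le_mul_of_nonneg_left this hsd.le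
      _ = Real.sqrt r := by field_simp
  -- part 2
  have hJf1 : Integrable (fun p : Sp d × Sp d => Jop f p.1) ξ := htransf _ hJc hJζ
  have hJf2 : Integrable (fun p : Sp d × Sp d => Jop f p.2) ξ := htranss _ hJc hJζt
  have hG1sq : Integrable (fun p : Sp d × Sp d => g0 p.1 ^ 2) ξ := htransf _ (hg0c.pow 2) hg0sqζ
  have hGL2 : MemLp (fun p : Sp d × Sp d => g0 p.1) 2 ξ :=
    (memLp_two_iff_integrable_sq (hg0c.comp continuous_fst).aestronglyMeasurable).mpr hG1sq
  have hB1 : Integrable (fun p : Sp d × Sp d => g0 p.1 * costFn p) ξ := by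
    refine Integrable.mono' ((hG1sq.add hcost2).div_const 2)
      (((hg0c.comp continuous_fst).mul hcc).aestronglyMeasurable)
      (ae_of_all _ fun p => ?_)
    rw [Real.norm_eq_abs, abs_of_nonneg (mul_nonneg (hg00 _) (hcost0 _))]
    simp only [Pi.add_apply]
    nlinarith [sq_nonneg (g0 p.1 - costFn p)]
  have hcs2 : ∫ p, g0 p.1 * costFn p ∂ξ ≤
      Real.sqrt (∫ p, g0 p.1 ^ 2 ∂ξ) * Real.sqrt r :=
    cs_int_s15 ξ hGL2 hcostL2 (fun p => hg00 p.1) hcost0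
  have heG2 : ∫ p, g0 p.1 ^ 2 ∂ξ = ∫ u, g0 u ^ 2 ∂ζ := (heqf _ (hg0c.pow 2)).symm
  set M := ∫ u, ‖u.2.1 - u.1.1‖ ^ 2 ∂ζ with hMdef
  have hM0 : 0 ≤ M := integral_nonneg fun u => sq_nonneg _
  have heM : ∫ u, g0 u ^ 2 ∂ζ = M / d := by
    rw [hMdef, ← integral_div]
    congr 1; ext u
    rw [g0, div_pow, Real.sq_sqrt hdpos.le, norm_sub_rev]
  have hsqrtM : Real.sqrt (∫ p, g0 p.1 ^ 2 ∂ξ) = Real.sqrt M / Real.sqrt d := by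
    rw [heG2, heM, Real.sqrt_div hM0]
  have hpt : ∀ p : Sp d × Sp d, |Jop f p.2 - Jop f p.1| ≤
      Lf * (g0 p.1 * costFn p) + Bf / Real.sqrt d * costFn p := by
    intro p
    rw [abs_sub_comm]
    have := Jop_diff_bound hd f hLf hLip hBdd p.1 p.2
    exact le_of_le_of_eq this (by ring)
  have hBint : Integrable (fun p : Sp d × Sp d =>
      Lf * (g0 p.1 * costFn p) + Bf / Real.sqrt d * costFn p) ξ :=
    (hB1.const_mul Lf).add (hcostInt.const_mul _)
  have key2 : |(∫ u, Jop f u ∂ζt) - ∫ u, Jop f u ∂ζ| ≤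
      Lf * (∫ p, g0 p.1 * costFn p ∂ξ) + Bf / Real.sqrt d * ∫ p, costFn p ∂ξ := by
    rw [heqf _ hJc, heqs _ hJc, ← integral_sub hJf2 hJf1]
    calc |∫ p, (Jop f p.2 - Jop f p.1) ∂ξ| ≤ ∫ p, |Jop f p.2 - Jop f p.1| ∂ξ := by
          simpa [Real.norm_eq_abs] using norm_integral_le_integral_norm
            (μ := ξ) (fun p : Sp d × Sp d => Jop f p.2 - Jop f p.1)
      _ ≤ ∫ p, (Lf * (g0 p.1 * costFn p) + Bf / Real.sqrt d * costFn p) ∂ξ :=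
          integral_mono (hJf2.sub hJf1).abs hBint hpt
      _ = Lf * (∫ p, g0 p.1 * costFn p ∂ξ) + Bf / Real.sqrt d * ∫ p, costFn p ∂ξ := by
          rw [integral_add (hB1.const_mul Lf) (hcostInt.const_mul _),
            integral_const_mul, integral_const_mul]
  have part2 : Real.sqrt d * |(∫ u, Jop f u ∂ζt) - ∫ u, Jop f u ∂ζ| ≤
      Real.sqrt r * (Lf * Real.sqrt M + Bf) := by
    have hstep : |(∫ u, Jop f u ∂ζt) - ∫ u, Jop f u ∂ζ| ≤
        Lf * (Real.sqrt M / Real.sqrt d * Real.sqrt r) + Bf / Real.sqrt d * Real.sqrt r := by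
      refine le_trans key2 (add_le_add ?_ ?_)
      · refine mul_le_mul_of_nonneg_left ?_ hLf
        rw [← hsqrtM]
        exact hcs2
      · exact mul_le_mul_of_nonneg_left hcs1 (by positivity)
    calc Real.sqrt d * |(∫ u, Jop f u ∂ζt) - ∫ u, Jop f u ∂ζ| ≤
        Real.sqrt d * (Lf * (Real.sqrt M / Real.sqrt d * Real.sqrt r) +
          Bf / Real.sqrt d * Real.sqrt r) := mul_le_mul_of_nonneg_left hstep hsd.le
      _ = Real.sqrt r * (Lf * Real.sqrt M + Bf) := by field_simp
  exact ⟨part1, part2⟩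

end Aux

/-- **Theorem 2 (quantitative form): bound on the discrepancy of ergodic averages.**
With `μ(f) = H⁻¹ ζ(𝒥f)`, `μ̃(f) = H̃⁻¹ ζ̃(𝒥f)`, where `H = ζ(g) > 0`, `H̃ = ζ̃(g) > 0`
and `g(x,v,x',v') = ‖x−x'‖₂/√d`, for every bounded Lipschitz `f`,
`|μ̃(f) − μ(f)| ≤ (d_W(ζ, ζ̃)/(√d H̃)) (|f|_Lip E_ζ[‖x'−x‖²]^{1/2} + ‖f‖_∞ + |μ(f)|)`. -/
theorem ergodic_average_discrepancy_bound {d : ℕ} (hd : 0 < d)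
    (ζ ζt : Measure ((EuclideanSpace ℝ (Fin d) × EuclideanSpace ℝ (Fin d)) ×
      (EuclideanSpace ℝ (Fin d) × EuclideanSpace ℝ (Fin d))))
    [IsProbabilityMeasure ζ] [IsProbabilityMeasure ζt]
    (hζ2 : Integrable (fun u => ‖u.1.1‖ ^ 2 + ‖u.1.2‖ ^ 2 + ‖u.2.1‖ ^ 2 + ‖u.2.2‖ ^ 2) ζ)
    (hζt2 : Integrable (fun u => ‖u.1.1‖ ^ 2 + ‖u.1.2‖ ^ 2 + ‖u.2.1‖ ^ 2 + ‖u.2.2‖ ^ 2) ζt)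
    (g : (EuclideanSpace ℝ (Fin d) × EuclideanSpace ℝ (Fin d)) ×
         (EuclideanSpace ℝ (Fin d) × EuclideanSpace ℝ (Fin d)) → ℝ)
    (hg : ∀ u, g u = ‖u.1.1 - u.2.1‖ / Real.sqrt d)
    (H Ht : ℝ) (hH : H = ∫ u, g u ∂ζ) (hHt : Ht = ∫ u, g u ∂ζt)
    (hHpos : 0 < H) (hHtpos : 0 < Ht)
    (f : EuclideanSpace ℝ (Fin d) → EuclideanSpace ℝ (Fin d) → ℝ)
    (Lf Bf : ℝ)
    (hLip : ∀ x v y w, |f x v - f y w| ≤ Lf * (‖x - y‖ + ‖v - w‖))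
    (hBdd : ∀ x v, |f x v| ≤ Bf) :
    |Ht⁻¹ * (∫ u, Jop f u ∂ζt) - H⁻¹ * ∫ u, Jop f u ∂ζ| ≤
      W2S ζ ζt / (Real.sqrt d * Ht) *
        (Lf * Real.sqrt (∫ u, ‖u.2.1 - u.1.1‖ ^ 2 ∂ζ) + Bf +
          |H⁻¹ * ∫ u, Jop f u ∂ζ|) := by
  have hBf : 0 ≤ Bf := le_trans (abs_nonneg _) (hBdd 0 0)
  have hLf : 0 ≤ Lf := by
    by_contra hcon
    push_neg at hcon
    haveI : Nonempty (Fin d) := ⟨⟨0, hd⟩⟩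
    obtain ⟨y, hy⟩ := exists_ne (0 : EuclideanSpace ℝ (Fin d))
    have h1 := hLip y 0 0 0
    have h2 : 0 < ‖y - (0 : EuclideanSpace ℝ (Fin d))‖ := by
      rw [sub_zero]; exact norm_pos_iff.mpr hy
    have h3 : Lf * (‖y - (0 : EuclideanSpace ℝ (Fin d))‖ +
        ‖(0 : EuclideanSpace ℝ (Fin d)) - 0‖) < 0 := by
      rw [sub_self, norm_zero, add_zero]; exact mul_neg_of_neg_of_pos hcon h2
    exact absurd (le_trans (abs_nonneg _) h1) (not_le.mpr h3)
  have hdpos : (0:ℝ) < d := by exact_mod_cast hd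
  have hsd : 0 < Real.sqrt d := Real.sqrt_pos.mpr hdpos
  have hgeq : g = g0 (d := d) := funext fun u => by rw [hg, g0]
  subst hgeq
  set A := ∫ u, Jop f u ∂ζ with hA
  set At := ∫ u, Jop f u ∂ζt with hAt
  set M := ∫ u, ‖u.2.1 - u.1.1‖ ^ 2 ∂ζ with hM
  have hM0 : 0 ≤ M := integral_nonneg fun u => sq_nonneg _
  set C := Lf * Real.sqrt M + Bf with hC
  have hC0 : 0 ≤ C := by positivity
  have hW : W2S ζ ζt = Real.sqrt (sInf {r : ℝ | ∃ ξ, ξ.map Prod.fst = ζ ∧ ξ.map Prod.snd = ζt ∧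
      r = ∫ p, (‖p.1.1.1 - p.2.1.1‖ + ‖p.1.1.2 - p.2.1.2‖ +
                ‖p.1.2.1 - p.2.2.1‖ + ‖p.1.2.2 - p.2.2.2‖) ^ 2 ∂ξ}) := rfl
  have hW0 : 0 ≤ W2S ζ ζt := Real.sqrt_nonneg _
  have hne : Set.Nonempty {r : ℝ | ∃ ξ, ξ.map Prod.fst = ζ ∧ ξ.map Prod.snd = ζt ∧
      r = ∫ p, (‖p.1.1.1 - p.2.1.1‖ + ‖p.1.1.2 - p.2.1.2‖ +
                ‖p.1.2.1 - p.2.2.1‖ + ‖p.1.2.2 - p.2.2.2‖) ^ 2 ∂ξ} := by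
    refine ⟨_, ζ.prod ζt, ?_, ?_, rfl⟩
    · rw [Measure.map_fst_prod]; simp
    · rw [Measure.map_snd_prod]; simp
  have hS0 : ∀ r ∈ {r : ℝ | ∃ ξ, ξ.map Prod.fst = ζ ∧ ξ.map Prod.snd = ζt ∧
      r = ∫ p, (‖p.1.1.1 - p.2.1.1‖ + ‖p.1.1.2 - p.2.1.2‖ +
                ‖p.1.2.1 - p.2.2.1‖ + ‖p.1.2.2 - p.2.2.2‖) ^ 2 ∂ξ}, 0 ≤ r := by
    rintro r ⟨ξ, -, -, rfl⟩
    exact integral_nonneg fun p => sq_nonneg _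
  have h1 : Real.sqrt d * |H - Ht| ≤ W2S ζ ζt * 1 := by
    rw [hW]
    refine sqrt_sInf_bound hne hS0 (by positivity) zero_le_one ?_
    rintro r ⟨ξ, hξ1, hξ2, rfl⟩
    have := (coupling_key hd ζ ζt hζ2 hζt2 f hLf hLip hBdd ξ hξ1 hξ2).1
    rw [hH, hHt, mul_one]
    exact this
  have h2 : Real.sqrt d * |At - A| ≤ W2S ζ ζt * C := by
    rw [hW]
    refine sqrt_sInf_bound hne hS0 (by positivity) hC0 ?_
    rintro r ⟨ξ, hξ1, hξ2, rfl⟩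
    exact (coupling_key hd ζ ζt hζ2 hζt2 f hLf hLip hBdd ξ hξ1 hξ2).2
  have hH' : |H - Ht| ≤ W2S ζ ζt / Real.sqrt d := by
    rw [le_div_iff₀ hsd, mul_comm]
    rw [mul_one] at h1
    exact h1
  have hAt' : |At - A| ≤ W2S ζ ζt * C / Real.sqrt d := by
    rw [le_div_iff₀ hsd, mul_comm]
    exact h2
  have hHne : H ≠ 0 := ne_of_gt hHpos
  have hHtne : Ht ≠ 0 := ne_of_gt hHtpos
  have hkey : Ht⁻¹ * At - H⁻¹ * A = Ht⁻¹ * (At - A) + Ht⁻¹ * (H - Ht) * (H⁻¹ * A) := by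
    field_simp
    ring
  calc |Ht⁻¹ * At - H⁻¹ * A|
      = |Ht⁻¹ * (At - A) + Ht⁻¹ * (H - Ht) * (H⁻¹ * A)| := by rw [hkey]
    _ ≤ |Ht⁻¹ * (At - A)| + |Ht⁻¹ * (H - Ht) * (H⁻¹ * A)| := abs_add_le _ _
    _ = Ht⁻¹ * |At - A| + Ht⁻¹ * (|H - Ht| * |H⁻¹ * A|) := by
        rw [abs_mul, abs_mul, abs_mul, abs_of_pos (inv_pos.mpr hHtpos)]
        ring
    _ ≤ Ht⁻¹ * (W2S ζ ζt * C / Real.sqrt d) +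
        Ht⁻¹ * (W2S ζ ζt / Real.sqrt d * |H⁻¹ * A|) := by
        gcongr
    _ = W2S ζ ζt / (Real.sqrt d * Ht) * (C + |H⁻¹ * A|) := by
        field_simp
    _ = W2S ζ ζt / (Real.sqrt d * Ht) * (Lf * Real.sqrt M + Bf + |H⁻¹ * A|) := by
        rw [hC]
end
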